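/- Let n > 2 be an integer with n ≡ 2 (mod 3) and let σ₁, σ₂, σ₃ be derangements of {1,…,n}. Then φ(σ₁)·φ(σ₂)·φ(σ₃) ∈ C_n. -/

import Mathlib

attribute [local instance] Classical.propDecidable

/-- `G_n` is realized additively as the group of `ℤ`-valued functions on unordered
pairs from `{1,…,n}`; `pgen n i j` is the generator `p_{i,j} = p_{j,i}`. -/
noncomputable def pgen (n : ℕ) (i j : Fin n) : Sym2 (Fin n) → ℤ :=
  Pi.single s(i, j) 1

/-- `φ(σ) = ∏_i p_{i,σ(i)}` (written additively). -/
noncomputable def phi (n : ℕ) (σ : Equiv.Perm (Fin n)) : Sym2 (Fin n) → ℤ :=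
  ∑ i : Fin n, pgen n i (σ i)

/-- The subgroup `C_n ≤ G_n` generated by the elements
`c_{i,j,k} = p_{i,j}·p_{j,k}·p_{i,k}` for pairwise distinct `i,j,k`. -/
noncomputable def Cgrp (n : ℕ) : AddSubgroup (Sym2 (Fin n) → ℤ) :=
  AddSubgroup.closure {x | ∃ i j k : Fin n, i ≠ j ∧ j ≠ k ∧ i ≠ k ∧
    x = pgen n i j + pgen n j k + pgen n i k}

lemma pgen_symm (n : ℕ) (i j : Fin n) : pgen n i j = pgen n j i := by
  unfold pgen; rw [Sym2.eq_swap]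

lemma gen_mem (n : ℕ) (i j k : Fin n) (hij : i ≠ j) (hjk : j ≠ k) (hik : i ≠ k) :
    pgen n i j + pgen n j k + pgen n i k ∈ Cgrp n :=
  AddSubgroup.subset_closure ⟨i, j, k, hij, hjk, hik, rfl⟩

lemma pick2 (n : ℕ) (hn : 5 ≤ n) (a b c : Fin n) :
    ∃ d e : Fin n, d ≠ e ∧ d ≠ a ∧ d ≠ b ∧ d ≠ c ∧ e ≠ a ∧ e ≠ b ∧ e ≠ c := by
  classical
  have hcard : 1 < (({a, b, c} : Finset (Fin n))ᶜ).card := by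
    have h1 : ({a, b, c} : Finset (Fin n)).card ≤ 3 := by
      apply le_trans (Finset.card_insert_le _ _)
      have := Finset.card_insert_le b ({c} : Finset (Fin n))
      simp at this ⊢
      omega
    rw [Finset.card_compl, Fintype.card_fin]
    omega
  obtain ⟨d, hd, e, he, hde⟩ := Finset.one_lt_card.mp hcard
  simp only [Finset.mem_compl, Finset.mem_insert, Finset.mem_singleton, not_or] at hd he
  exact ⟨d, e, hde, hd.1, hd.2.1, hd.2.2, he.1, he.2.1, he.2.2⟩

lemma two_mem (n : ℕ) (hn : 5 ≤ n) (a b c : Fin n) (hab : a ≠ b) (hac : a ≠ c) :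
    (2:ℤ) • pgen n a b - (2:ℤ) • pgen n a c ∈ Cgrp n := by
  by_cases hbc : b = c
  · subst hbc; simp only [sub_self]; exact zero_mem _
  obtain ⟨d, e, hde, hda, hdb, hdc, hea, heb, hec⟩ := pick2 n hn a b c
  have key : (2:ℤ) • pgen n a b - (2:ℤ) • pgen n a c =
      (pgen n a b + pgen n b d + pgen n a d)
      - (pgen n a c + pgen n c d + pgen n a d)
      + (pgen n a b + pgen n b e + pgen n a e)
      - (pgen n a c + pgen n c e + pgen n a e)
      - (pgen n b d + pgen n d e + pgen n b e)
      + (pgen n c d + pgen n d e + pgen n c e) := by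
    abel
  rw [key]
  exact add_mem (sub_mem (sub_mem (add_mem (sub_mem
    (gen_mem n a b d hab hdb.symm hda.symm)
    (gen_mem n a c d hac hdc.symm hda.symm))
    (gen_mem n a b e hab heb.symm hea.symm))
    (gen_mem n a c e hac hec.symm hea.symm))
    (gen_mem n b d e hdb.symm hde heb.symm))
    (gen_mem n c d e hdc.symm hde hec.symm)

lemma six_mem (n : ℕ) (hn : 5 ≤ n) (a b : Fin n) (hab : a ≠ b) :
    (6:ℤ) • pgen n a b ∈ Cgrp n := by
  obtain ⟨c, _, _, hca, hcb, _, _, _⟩ := pick2 n hn a b b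
  have key : (6:ℤ) • pgen n a b =
      (2:ℤ) • (pgen n a b + pgen n b c + pgen n a c)
      - ((2:ℤ) • pgen n a c - (2:ℤ) • pgen n a b)
      - ((2:ℤ) • pgen n b c - (2:ℤ) • pgen n b a) := by
    rw [pgen_symm n b a]; abel
  rw [key]
  exact sub_mem (sub_mem
    (zsmul_mem (gen_mem n a b c hab hcb.symm hca.symm) 2)
    (two_mem n hn a c b hca.symm hab))
    (two_mem n hn b c a hcb.symm hab.symm)

lemma perm_apply_inv_self' {n : ℕ} (σ : Equiv.Perm (Fin n)) (x : Fin n) : σ (σ⁻¹ x) = x :=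
  Equiv.apply_symm_apply σ x

lemma perm_inv_apply_self' {n : ℕ} (σ : Equiv.Perm (Fin n)) (x : Fin n) : σ⁻¹ (σ x) = x :=
  Equiv.symm_apply_apply σ x

lemma inv_ne_self' (n : ℕ) (σ : Equiv.Perm (Fin n)) (hσ : ∀ i, σ i ≠ i) (z : Fin n) :
    σ⁻¹ z ≠ z := by
  intro h
  have h2 := congrArg σ h
  rw [perm_apply_inv_self'] at h2
  exact hσ z h2.symm

lemma phi_red (n : ℕ) (z : Fin n) (σ : Equiv.Perm (Fin n)) (hσ : ∀ i, σ i ≠ i) :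
    ∃ M ∈ Cgrp n, phi n σ = M + (2:ℤ) • pgen n z (σ z) + (2:ℤ) • pgen n z (σ⁻¹ z)
      - (2:ℤ) • (∑ i ∈ Finset.univ.erase z, pgen n z i) := by
  classical
  have hz1 : σ⁻¹ z ≠ z := inv_ne_self' n σ hσ z
  set S : Finset (Fin n) := (Finset.univ.erase z).erase (σ⁻¹ z) with hS
  refine ⟨∑ i ∈ S, (pgen n z i + pgen n i (σ i) + pgen n z (σ i)), ?_, ?_⟩
  · refine sum_mem fun i hi => ?_
    have hi' := Finset.mem_erase.mp hi
    have hiz : i ≠ z := (Finset.mem_erase.mp hi'.2).1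
    have hinv : i ≠ σ⁻¹ z := hi'.1
    have hσiz : z ≠ σ i := by
      intro h
      exact hinv (by rw [h, perm_inv_apply_self'])
    exact gen_mem n z i (σ i) hiz.symm (hσ i).symm hσiz
  · have hmem : σ⁻¹ z ∈ Finset.univ.erase z := Finset.mem_erase.mpr ⟨hz1, Finset.mem_univ _⟩
    have e1 : ∀ f : Fin n → (Sym2 (Fin n) → ℤ),
        ∑ i ∈ S, f i = (∑ i ∈ Finset.univ.erase z, f i) - f (σ⁻¹ z) := fun f => by
      rw [hS, Finset.sum_erase_eq_sub hmem]
    have e2 : ∀ f : Fin n → (Sym2 (Fin n) → ℤ),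
        ∑ i ∈ Finset.univ.erase z, f i = (∑ i : Fin n, f i) - f z := fun f => by
      rw [Finset.sum_erase_eq_sub (Finset.mem_univ z)]
    have e5 : ∑ i : Fin n, pgen n z (σ i) = ∑ i : Fin n, pgen n z i := Equiv.sum_comp σ _
    rw [Finset.sum_add_distrib, Finset.sum_add_distrib]
    rw [e1 (fun i => pgen n z i), e1 (fun i => pgen n i (σ i)), e1 (fun i => pgen n z (σ i))]
    rw [e2 (fun i => pgen n z i), e2 (fun i => pgen n i (σ i)), e2 (fun i => pgen n z (σ i))]
    rw [e5]
    simp only [perm_apply_inv_self']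
    rw [pgen_symm n (σ⁻¹ z) z]
    show phi n σ = _
    unfold phi
    abel

/-- For `n > 2` with `n ≡ 2 (mod 3)` and derangements `σ₁, σ₂, σ₃` of `{1,…,n}`,
`φ(σ₁)·φ(σ₂)·φ(σ₃) ∈ C_n` (written additively). -/
theorem stmt_16 (n : ℕ) (h2 : 2 < n) (hmod : n % 3 = 2)
    (σ₁ σ₂ σ₃ : Equiv.Perm (Fin n))
    (h₁ : ∀ i, σ₁ i ≠ i) (h₂ : ∀ i, σ₂ i ≠ i) (h₃ : ∀ i, σ₃ i ≠ i) :
    phi n σ₁ + phi n σ₂ + phi n σ₃ ∈ Cgrp n := by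
  classical
  have hn : 5 ≤ n := by omega
  set z : Fin n := ⟨0, by omega⟩ with hz
  set w : Fin n := ⟨1, by omega⟩ with hw
  have hzw : z ≠ w := by
    intro h; rw [Fin.ext_iff] at h; simp [hz, hw] at h
  obtain ⟨M₁, hM₁, hE₁⟩ := phi_red n z σ₁ h₁
  obtain ⟨M₂, hM₂, hE₂⟩ := phi_red n z σ₂ h₂
  obtain ⟨M₃, hM₃, hE₃⟩ := phi_red n z σ₃ h₃
  rw [hE₁, hE₂, hE₃]
  have key : (M₁ + (2:ℤ) • pgen n z (σ₁ z) + (2:ℤ) • pgen n z (σ₁⁻¹ z)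
        - (2:ℤ) • (∑ i ∈ Finset.univ.erase z, pgen n z i))
      + (M₂ + (2:ℤ) • pgen n z (σ₂ z) + (2:ℤ) • pgen n z (σ₂⁻¹ z)
        - (2:ℤ) • (∑ i ∈ Finset.univ.erase z, pgen n z i))
      + (M₃ + (2:ℤ) • pgen n z (σ₃ z) + (2:ℤ) • pgen n z (σ₃⁻¹ z)
        - (2:ℤ) • (∑ i ∈ Finset.univ.erase z, pgen n z i))
      = M₁ + M₂ + M₃
      + ((2:ℤ) • pgen n z (σ₁ z) - (2:ℤ) • pgen n z w)
      + ((2:ℤ) • pgen n z (σ₁⁻¹ z) - (2:ℤ) • pgen n z w)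
      + ((2:ℤ) • pgen n z (σ₂ z) - (2:ℤ) • pgen n z w)
      + ((2:ℤ) • pgen n z (σ₂⁻¹ z) - (2:ℤ) • pgen n z w)
      + ((2:ℤ) • pgen n z (σ₃ z) - (2:ℤ) • pgen n z w)
      + ((2:ℤ) • pgen n z (σ₃⁻¹ z) - (2:ℤ) • pgen n z w)
      + (2:ℤ) • ((6:ℤ) • pgen n z w)
      - ∑ i ∈ Finset.univ.erase z, (6:ℤ) • pgen n z i := by
    rw [← Finset.smul_sum]
    abel
  rw [key]
  have hd : ∀ (σ : Equiv.Perm (Fin n)), (∀ i, σ i ≠ i) →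
      (2:ℤ) • pgen n z (σ z) - (2:ℤ) • pgen n z w ∈ Cgrp n := fun σ hσ =>
    two_mem n hn z (σ z) w (hσ z).symm hzw
  have hd' : ∀ (σ : Equiv.Perm (Fin n)), (∀ i, σ i ≠ i) →
      (2:ℤ) • pgen n z (σ⁻¹ z) - (2:ℤ) • pgen n z w ∈ Cgrp n := fun σ hσ =>
    two_mem n hn z (σ⁻¹ z) w (inv_ne_self' n σ hσ z).symm hzw
  refine sub_mem (add_mem (add_mem (add_mem (add_mem (add_mem (add_mem (add_mem
    (add_mem (add_mem hM₁ hM₂) hM₃)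
    (hd σ₁ h₁)) (hd' σ₁ h₁)) (hd σ₂ h₂)) (hd' σ₂ h₂)) (hd σ₃ h₃)) (hd' σ₃ h₃))
    (zsmul_mem (six_mem n hn z w hzw) 2)) ?_
  exact sum_mem fun i hi =>
    six_mem n hn z i (Ne.symm (Finset.mem_erase.mp hi).1)
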